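/- The elliptic component of the Lagrangian descriptor is a linearly increasing function of the integration time: writing τ = N(π/ω) + r with N a nonnegative integer and r ∈ [0, π/ω), one has M^e_γ(τ) = (4(ωR)^γ/√π) · (Γ((γ+1)/2)/Γ(γ/2 + 1)) · (τ − r) + M^e_γ(r). -/

import Mathlib

open Filter intervalIntegral

open Real MeasureTheory

lemma aux_beta {γ : ℝ} (hγ : 0 < γ) :
    ∫ x in (0:ℝ)..1, x ^ ((γ-1)/2) * (1-x) ^ ((γ-1)/2) =
      Real.Gamma ((γ+1)/2) ^ 2 / Real.Gamma (γ+1) := by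
  have hs : 0 < ((((γ+1)/2 : ℝ)) : ℂ).re := by
    rw [Complex.ofReal_re]; linarith
  have hb := Complex.Gamma_mul_Gamma_eq_betaIntegral (s := ((γ+1)/2 : ℝ)) (t := ((γ+1)/2 : ℝ)) hs hs
  have hcast : Complex.betaIntegral ((γ+1)/2 : ℝ) ((γ+1)/2 : ℝ) =
      ((∫ x in (0:ℝ)..1, x ^ ((γ-1)/2) * (1-x) ^ ((γ-1)/2) : ℝ) : ℂ) := by
    rw [Complex.betaIntegral, ← intervalIntegral.integral_ofReal]
    refine intervalIntegral.integral_congr_ae ?_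
    have : ∀ᵐ x : ℝ, x ∈ Set.uIoc (0:ℝ) 1 → ((x:ℂ) ^ (((γ+1)/2 : ℝ) - 1 : ℂ) * (1 - (x:ℂ)) ^ (((γ+1)/2 : ℝ) - 1 : ℂ)
        = ((x ^ ((γ-1)/2) * (1-x) ^ ((γ-1)/2) : ℝ) : ℂ)) := by
      refine Filter.Eventually.of_forall fun x hx => ?_
      rw [Set.uIoc_of_le (by norm_num : (0:ℝ) ≤ 1)] at hx
      have hx0 : (0:ℝ) ≤ x := le_of_lt hx.1
      have hx1 : (0:ℝ) ≤ 1 - x := by linarith [hx.2]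
      have e1 : (((γ+1)/2 : ℝ) : ℂ) - 1 = (((γ-1)/2 : ℝ) : ℂ) := by push_cast; ring
      rw [e1, ← Complex.ofReal_cpow hx0, ← Complex.ofReal_one, ← Complex.ofReal_sub,
        ← Complex.ofReal_cpow hx1]
      push_cast
      ring
    exact this
  rw [hcast] at hb
  have he : ((((γ+1)/2 : ℝ)) : ℂ) + (((γ+1)/2 : ℝ) : ℂ) = ((γ+1 : ℝ) : ℂ) := by
    push_cast; ring
  rw [he, Complex.Gamma_ofReal, Complex.Gamma_ofReal, ← Complex.ofReal_mul, ← Complex.ofReal_mul]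
    at hb
  have hb' : Real.Gamma ((γ+1)/2) * Real.Gamma ((γ+1)/2) =
      Real.Gamma (γ+1) * ∫ x in (0:ℝ)..1, x ^ ((γ-1)/2) * (1-x) ^ ((γ-1)/2) :=
    Complex.ofReal_inj.mp hb
  have hG : 0 < Real.Gamma (γ+1) := Real.Gamma_pos_of_pos (by linarith)
  field_simp
  rw [sq]
  linarith [hb']

lemma aux_sin {γ : ℝ} (hγ : 0 < γ) :
    ∫ x in (0:ℝ)..Real.pi, Real.sin x ^ γ =
      Real.sqrt Real.pi * (Real.Gamma ((γ+1)/2) / Real.Gamma (γ/2+1)) := by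
  have hsub : ∫ x in Set.Ioo (0:ℝ) 1, x ^ ((γ-1)/2) * (1-x) ^ ((γ-1)/2) =
      ∫ t in Set.Ioo (0:ℝ) Real.pi, Real.sin t ^ γ / 2 ^ γ := by
    have himg : (fun t => Real.sin (t/2) ^ 2) '' Set.Ioo (0:ℝ) Real.pi = Set.Ioo (0:ℝ) 1 := by
      ext u
      constructor
      · rintro ⟨t, ht, rfl⟩
        have h1 : 0 < Real.sin (t/2) :=
          Real.sin_pos_of_pos_of_lt_pi (by linarith [ht.1]) (by nlinarith [ht.2, Real.pi_pos])
        have h2 : 0 < Real.cos (t/2) :=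
          Real.cos_pos_of_mem_Ioo ⟨by nlinarith [ht.1, Real.pi_pos], by linarith [ht.2]⟩
        constructor
        · positivity
        · nlinarith [Real.sin_sq_add_cos_sq (t/2)]
      · rintro ⟨h0, h1⟩
        refine ⟨2 * Real.arcsin (Real.sqrt u), ⟨?_, ?_⟩, ?_⟩
        · have := Real.arcsin_pos.mpr (Real.sqrt_pos.mpr h0)
          linarith
        · have : Real.arcsin (Real.sqrt u) < Real.pi / 2 := by
            apply Real.arcsin_lt_pi_div_two.mpr
            rw [show (1:ℝ) = Real.sqrt 1 by simp]
            exact Real.sqrt_lt_sqrt (le_of_lt h0) h1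
          linarith
        · show Real.sin (2 * Real.arcsin (Real.sqrt u) / 2) ^ 2 = u
          rw [show 2 * Real.arcsin (Real.sqrt u) / 2 = Real.arcsin (Real.sqrt u) by ring,
            Real.sin_arcsin (by linarith [Real.sqrt_nonneg u]) (Real.sqrt_le_one.mpr (le_of_lt h1)),
            Real.sq_sqrt (le_of_lt h0)]
    have hder : ∀ t ∈ Set.Ioo (0:ℝ) Real.pi,
        HasDerivWithinAt (fun t => Real.sin (t/2) ^ 2) (Real.sin t / 2) (Set.Ioo 0 Real.pi) t := by
      intro t _
      have h1 : HasDerivAt (fun t : ℝ => Real.sin (t/2)) (Real.cos (t/2) * (1/2)) t := by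
        have := (Real.hasDerivAt_sin (t/2)).comp t ((hasDerivAt_id t).div_const 2); exact this
      have h2 := h1.pow 2
      have h3 := h2.hasDerivWithinAt (s := Set.Ioo (0:ℝ) Real.pi)
      refine h3.congr_deriv ?_
      rw [show t = 2 * (t/2) by ring, Real.sin_two_mul]
      push_cast
      ring_nf
    have hinj : Set.InjOn (fun t => Real.sin (t/2) ^ 2) (Set.Ioo (0:ℝ) Real.pi) := by
      intro a ha b hb hab
      have hsa : 0 ≤ Real.sin (a/2) := Real.sin_nonneg_of_nonneg_of_le_pi
        (by linarith [ha.1]) (by nlinarith [ha.2, Real.pi_pos])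
      have hsb : 0 ≤ Real.sin (b/2) := Real.sin_nonneg_of_nonneg_of_le_pi
        (by linarith [hb.1]) (by nlinarith [hb.2, Real.pi_pos])
      have heq : Real.sin (a/2) = Real.sin (b/2) := by
        nlinarith [hab]
      have := Real.injOn_sin ⟨by linarith [ha.1, Real.pi_pos], by linarith [ha.2]⟩
        ⟨by linarith [hb.1, Real.pi_pos], by linarith [hb.2]⟩ heq
      linarith
    have := MeasureTheory.integral_image_eq_integral_abs_deriv_smul measurableSet_Ioo hder hinj
      (fun x => x ^ ((γ-1)/2) * (1-x) ^ ((γ-1)/2))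
    rw [himg] at this
    rw [this]
    refine MeasureTheory.setIntegral_congr_fun measurableSet_Ioo fun t ht => ?_
    have h1 : 0 < Real.sin (t/2) :=
      Real.sin_pos_of_pos_of_lt_pi (by linarith [ht.1]) (by nlinarith [ht.2, Real.pi_pos])
    have h2 : 0 < Real.cos (t/2) :=
      Real.cos_pos_of_mem_Ioo ⟨by nlinarith [ht.1, Real.pi_pos], by linarith [ht.2]⟩
    have hst : Real.sin t = 2 * (Real.sin (t/2) * Real.cos (t/2)) := by
      rw [show t = 2 * (t/2) by ring, Real.sin_two_mul]; ring
    have e1 : (1:ℝ) - Real.sin (t/2) ^ 2 = Real.cos (t/2) ^ 2 := by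
      nlinarith [Real.sin_sq_add_cos_sq (t/2)]
    have e2 : (Real.sin (t/2) ^ 2 : ℝ) ^ ((γ-1)/2) = Real.sin (t/2) ^ (γ-1) := by
      rw [← Real.rpow_natCast (Real.sin (t/2)) 2, ← Real.rpow_mul (le_of_lt h1)]
      congr 1; push_cast; ring
    have e3 : (Real.cos (t/2) ^ 2 : ℝ) ^ ((γ-1)/2) = Real.cos (t/2) ^ (γ-1) := by
      rw [← Real.rpow_natCast (Real.cos (t/2)) 2, ← Real.rpow_mul (le_of_lt h2)]
      congr 1; push_cast; ring
    have e4 : Real.sin (t/2) * Real.sin (t/2) ^ (γ-1) = Real.sin (t/2) ^ γ := by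
      nth_rewrite 1 [← Real.rpow_one (Real.sin (t/2))]
      rw [← Real.rpow_add h1]; norm_num
    have e5 : Real.cos (t/2) * Real.cos (t/2) ^ (γ-1) = Real.cos (t/2) ^ γ := by
      nth_rewrite 1 [← Real.rpow_one (Real.cos (t/2))]
      rw [← Real.rpow_add h2]; norm_num
    simp only [smul_eq_mul]
    rw [e1, e2, e3]
    have habs : |Real.sin t / 2| = Real.sin (t/2) * Real.cos (t/2) := by
      rw [hst, abs_of_nonneg (by positivity)]; ring
    have hsg : Real.sin t ^ γ = 2 ^ γ * (Real.sin (t/2) ^ γ * Real.cos (t/2) ^ γ) := by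
      rw [hst, Real.mul_rpow (by norm_num) (by positivity), Real.mul_rpow h1.le h2.le]
    have h2γ : (0:ℝ) < 2 ^ γ := Real.rpow_pos_of_pos two_pos γ
    rw [habs, hsg, ← e4, ← e5]
    field_simp
  have hb := aux_beta hγ
  rw [intervalIntegral.integral_of_le (by norm_num : (0:ℝ) ≤ 1),
    MeasureTheory.integral_Ioc_eq_integral_Ioo] at hb
  rw [hsub] at hb
  have hsplit : ∫ t in Set.Ioo (0:ℝ) Real.pi, Real.sin t ^ γ / 2 ^ γ =
      (∫ t in Set.Ioo (0:ℝ) Real.pi, Real.sin t ^ γ) / 2 ^ γ := by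
    rw [MeasureTheory.integral_div]
  rw [hsplit] at hb
  have h2γ : (0:ℝ) < 2 ^ γ := Real.rpow_pos_of_pos two_pos γ
  have hint : ∫ t in Set.Ioo (0:ℝ) Real.pi, Real.sin t ^ γ =
      2 ^ γ * (Real.Gamma ((γ+1)/2) ^ 2 / Real.Gamma (γ+1)) := by
    field_simp at hb ⊢
    linarith [hb]
  rw [intervalIntegral.integral_of_le Real.pi_pos.le,
    MeasureTheory.integral_Ioc_eq_integral_Ioo, hint]
  have hleg := Real.Gamma_mul_Gamma_add_half ((γ+1)/2)
  rw [show (γ+1)/2 + 1/2 = γ/2 + 1 by ring, show 2*((γ+1)/2) = γ+1 by ring,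
    show 1 - (γ+1) = -γ by ring, Real.rpow_neg (by norm_num : (0:ℝ) ≤ 2)] at hleg
  have hG1 : 0 < Real.Gamma ((γ+1)/2) := Real.Gamma_pos_of_pos (by linarith)
  have hG2 : 0 < Real.Gamma (γ/2+1) := Real.Gamma_pos_of_pos (by linarith)
  have hG3 : 0 < Real.Gamma (γ+1) := Real.Gamma_pos_of_pos (by linarith)
  have hsp : 0 < Real.sqrt Real.pi := Real.sqrt_pos.mpr Real.pi_pos
  field_simp at hleg ⊢
  nlinarith [hleg, mul_pos hG1 hG1, mul_pos h2γ hG3]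

/-- The elliptic component of the Lagrangian descriptor
M^e_γ(τ) = ∫_{−τ}^{τ}(|q'|^γ + |p'|^γ) is a linearly increasing function of the
integration time: writing τ = N(π/ω) + r with N ∈ ℕ and r ∈ [0, π/ω), one has
M^e_γ(τ) = (4(ωR)^γ/√π)·(Γ((γ+1)/2)/Γ(γ/2 + 1))·(τ − r) + M^e_γ(r). -/
theorem stmt_10 (ω : ℝ) (hω : 0 < ω) (q0 p0 : ℝ) (R : ℝ)
    (hR : R = Real.sqrt (q0 ^ 2 + p0 ^ 2))
    (γ : ℝ) (hγ : γ ∈ Set.Ioc (0 : ℝ) 1)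
    (Me : ℝ → ℝ)
    (hMe : ∀ τ : ℝ, Me τ =
      ∫ t in (-τ)..τ,
        (|ω * (p0 * Real.cos (ω * t) - q0 * Real.sin (ω * t))| ^ γ +
         |-(ω * (q0 * Real.cos (ω * t) + p0 * Real.sin (ω * t)))| ^ γ)) :
    ∀ (N : ℕ) (r τ : ℝ), 0 ≤ r → r < Real.pi / ω → τ = N * (Real.pi / ω) + r →
      Me τ = 4 * (ω * R) ^ γ / Real.sqrt Real.pi *
          (Real.Gamma ((γ + 1) / 2) / Real.Gamma (γ / 2 + 1)) * (τ - r) + Me r := by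
  intro N r τ hr0 hrlt hτeq
  have hγ0 : 0 < γ := hγ.1
  rcases eq_or_ne (q0 ^ 2 + p0 ^ 2) 0 with hzero | hnz
  · -- degenerate case
    have hq0 : q0 = 0 := by nlinarith [sq_nonneg q0, sq_nonneg p0]
    have hp0 : p0 = 0 := by nlinarith [sq_nonneg q0, sq_nonneg p0]
    have hRz : R = 0 := by rw [hR, hzero, Real.sqrt_zero]
    have hMez : ∀ x : ℝ, Me x = 0 := by
      intro x
      rw [hMe x]
      have : ∀ t : ℝ, |ω * (p0 * Real.cos (ω * t) - q0 * Real.sin (ω * t))| ^ γ +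
          |-(ω * (q0 * Real.cos (ω * t) + p0 * Real.sin (ω * t)))| ^ γ = 0 := by
        intro t
        rw [hq0, hp0]
        simp [Real.zero_rpow hγ0.ne']
      simp only [this, intervalIntegral.integral_zero]
    rw [hMez τ, hMez r, hRz]
    rw [mul_zero, Real.zero_rpow hγ0.ne']
    ring
  · -- nondegenerate case
    have hsq : 0 < q0 ^ 2 + p0 ^ 2 :=
      lt_of_le_of_ne (by positivity) (Ne.symm hnz)
    have hRpos : 0 < R := by rw [hR]; exact Real.sqrt_pos.mpr hsq
    have hR2 : R ^ 2 = q0 ^ 2 + p0 ^ 2 := by rw [hR]; exact Real.sq_sqrt hsq.le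
    -- the phase
    set z : ℂ := ⟨p0 / R, q0 / R⟩ with hz
    have hznorm : ‖z‖ = 1 := by
      rw [Complex.norm_def, Complex.normSq_apply]
      show Real.sqrt (p0/R * (p0/R) + q0/R * (q0/R)) = 1
      rw [show p0/R * (p0/R) + q0/R * (q0/R) = (q0^2 + p0^2)/R^2 by field_simp; ring,
        ← hR2, div_self (by positivity)]
      exact Real.sqrt_one
    have hzne : z ≠ 0 := by
      intro h; rw [h] at hznorm; simp at hznorm
    set φ := Complex.arg z with hφ
    have hcosφ : Real.cos φ = p0 / R := by
      rw [hφ, Complex.cos_arg hzne, hznorm]; simp [hz]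
    have hsinφ : Real.sin φ = q0 / R := by
      rw [hφ, Complex.sin_arg, hznorm]; simp [hz]
    have hp0' : p0 = R * Real.cos φ := by rw [hcosφ]; field_simp
    have hq0' : q0 = R * Real.sin φ := by rw [hsinφ]; field_simp
    -- the normalized integrand
    set k : ℝ → ℝ := fun x => |Real.sin x| ^ γ + |Real.cos x| ^ γ with hk
    have hk_cont : Continuous k :=
      ((continuous_sin.abs).rpow_const fun x => Or.inr hγ0.le).add
        ((continuous_cos.abs).rpow_const fun x => Or.inr hγ0.le)
    have hk_int : ∀ a b : ℝ, IntervalIntegrable k volume a b := fun a b =>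
      hk_cont.intervalIntegrable a b
    have hk_per : Function.Periodic k Real.pi := by
      intro x
      simp only [hk, Real.sin_add_pi, Real.cos_add_pi, abs_neg]
    set c := Real.sqrt Real.pi * (Real.Gamma ((γ+1)/2) / Real.Gamma (γ/2+1)) with hc
    -- integral over one period
    have hsin_int : ∫ x in (0:ℝ)..Real.pi, |Real.sin x| ^ γ = c := by
      rw [hc, ← aux_sin hγ0]
      refine intervalIntegral.integral_congr fun x hx => ?_
      rw [Set.uIcc_of_le Real.pi_pos.le] at hx
      rw [abs_of_nonneg (Real.sin_nonneg_of_nonneg_of_le_pi hx.1 hx.2)]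
    have hcos_int : ∫ x in (0:ℝ)..Real.pi, |Real.cos x| ^ γ = c := by
      have hm_per : Function.Periodic (fun x => |Real.sin x| ^ γ) Real.pi := by
        intro x; simp [Real.sin_add_pi]
      calc ∫ x in (0:ℝ)..Real.pi, |Real.cos x| ^ γ
          = ∫ x in (0:ℝ)..Real.pi, |Real.sin (x + Real.pi/2)| ^ γ := by
            refine intervalIntegral.integral_congr fun x _ => ?_
            rw [Real.sin_add_pi_div_two]
        _ = ∫ x in (0 + Real.pi/2 : ℝ)..(Real.pi + Real.pi/2), |Real.sin x| ^ γ := by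
            rw [intervalIntegral.integral_comp_add_right (fun y => |Real.sin y| ^ γ) (Real.pi/2)]
        _ = ∫ x in (Real.pi/2 : ℝ)..(Real.pi/2 + Real.pi), |Real.sin x| ^ γ := by
            norm_num; ring_nf
        _ = ∫ x in (0:ℝ)..(0 + Real.pi), |Real.sin x| ^ γ :=
            hm_per.intervalIntegral_add_eq (Real.pi/2) 0
        _ = c := by rw [zero_add, hsin_int]
    have hk_one : ∀ a : ℝ, ∫ x in a..a + Real.pi, k x = 2 * c := by
      intro a
      rw [hk_per.intervalIntegral_add_eq a 0, zero_add]
      have : ∫ x in (0:ℝ)..Real.pi, k x =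
          (∫ x in (0:ℝ)..Real.pi, |Real.sin x| ^ γ) +
          ∫ x in (0:ℝ)..Real.pi, |Real.cos x| ^ γ := by
        rw [← intervalIntegral.integral_add
          (((continuous_sin.abs).rpow_const fun x => Or.inr hγ0.le).intervalIntegrable 0 Real.pi)
          (((continuous_cos.abs).rpow_const fun x => Or.inr hγ0.le).intervalIntegrable 0 Real.pi)]
      rw [this, hsin_int, hcos_int]; ring
    -- rewrite integrand
    have hF : ∀ t : ℝ, |ω * (p0 * Real.cos (ω * t) - q0 * Real.sin (ω * t))| ^ γ +
        |-(ω * (q0 * Real.cos (ω * t) + p0 * Real.sin (ω * t)))| ^ γ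
        = (ω * R) ^ γ * k (ω * t + φ) := by
      intro t
      have e1 : p0 * Real.cos (ω * t) - q0 * Real.sin (ω * t) = R * Real.cos (ω * t + φ) := by
        rw [Real.cos_add, hp0', hq0']; ring
      have e2 : q0 * Real.cos (ω * t) + p0 * Real.sin (ω * t) = R * Real.sin (ω * t + φ) := by
        rw [Real.sin_add, hp0', hq0']; ring
      have hA : |ω * (R * Real.cos (ω*t+φ))| = (ω*R) * |Real.cos (ω*t+φ)| := by
        rw [abs_mul, abs_mul, abs_of_pos hω, abs_of_pos hRpos, mul_assoc]
      have hB : |ω * (R * Real.sin (ω*t+φ))| = (ω*R) * |Real.sin (ω*t+φ)| := by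
        rw [abs_mul, abs_mul, abs_of_pos hω, abs_of_pos hRpos, mul_assoc]
      rw [e1, e2, abs_neg, hA, hB,
        Real.mul_rpow (by positivity) (abs_nonneg _),
        Real.mul_rpow (by positivity) (abs_nonneg _)]
      simp only [hk]
      ring
    -- Me in terms of k
    have hMe' : ∀ x : ℝ, Me x = (ω * R) ^ γ *
        (ω⁻¹ * ∫ s in (ω * (-x) + φ)..(ω * x + φ), k s) := by
      intro x
      rw [hMe x]
      simp only [hF]
      rw [intervalIntegral.integral_const_mul,
        intervalIntegral.integral_comp_mul_add k hω.ne' φ, smul_eq_mul]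
    have hωτ : ω * τ = N * Real.pi + ω * r := by
      rw [hτeq]; field_simp
    -- the two periodic blocks
    have hblock1 : ∫ s in (ω * r + φ)..(ω * τ + φ), k s = N * (2 * c) := by
      have : ω * τ + φ = (ω * r + φ) + (N : ℤ) • Real.pi := by
        rw [hωτ, zsmul_eq_mul]; push_cast; ring
      rw [this, hk_per.intervalIntegral_add_zsmul_eq (N : ℤ) (ω * r + φ) hk_int,
        hk_one (ω * r + φ), zsmul_eq_mul]
      push_cast; ring
    have hblock2 : ∫ s in (ω * (-τ) + φ)..(ω * (-r) + φ), k s = N * (2 * c) := by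
      have : ω * (-r) + φ = (ω * (-τ) + φ) + (N : ℤ) • Real.pi := by
        rw [show ω * (-r) = -(ω * r) by ring, show ω * (-τ) = -(ω * τ) by ring, hωτ,
          zsmul_eq_mul]
        push_cast; ring
      rw [this, hk_per.intervalIntegral_add_zsmul_eq (N : ℤ) (ω * (-τ) + φ) hk_int,
        hk_one (ω * (-τ) + φ), zsmul_eq_mul]
      push_cast; ring
    -- splitting
    have hsplit : ∫ s in (ω * (-τ) + φ)..(ω * τ + φ), k s =
        (∫ s in (ω * (-τ) + φ)..(ω * (-r) + φ), k s) +
        ((∫ s in (ω * (-r) + φ)..(ω * r + φ), k s) +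
          ∫ s in (ω * r + φ)..(ω * τ + φ), k s) := by
      rw [intervalIntegral.integral_add_adjacent_intervals (hk_int _ _) (hk_int _ _),
        intervalIntegral.integral_add_adjacent_intervals (hk_int _ _) (hk_int _ _)]
    have hτr : τ - r = N * (Real.pi / ω) := by rw [hτeq]; ring
    have hG2 : 0 < Real.Gamma (γ/2+1) := Real.Gamma_pos_of_pos (by linarith)
    have hsp : 0 < Real.sqrt Real.pi := Real.sqrt_pos.mpr Real.pi_pos
    have hππ : Real.sqrt Real.pi * Real.sqrt Real.pi = Real.pi :=
      Real.mul_self_sqrt Real.pi_pos.le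
    have hcoef : 4 * (ω * R) ^ γ / Real.sqrt Real.pi *
          (Real.Gamma ((γ+1)/2) / Real.Gamma (γ/2+1)) * ((N:ℝ) * (Real.pi/ω)) =
        (ω * R) ^ γ * ω⁻¹ * (4 * (N:ℝ) * c) := by
      rw [hc]
      field_simp
      linear_combination (-(N:ℝ)) * hππ
    rw [hMe' τ, hMe' r, hsplit, hblock1, hblock2, hτr, hcoef]
    ring
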